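/- arXiv:2111.15363 — 2 statements merged into one kernel-verified Lean document; each statement's English description precedes it below -/
import Mathlib

section
/- Fix an integer K ≥ 1 and a nonempty finite set U ⊆ [0, 2π], and let q(U) ∈ ℝ^K have coordinates q_k(U) = max_{u ∈ U} h_k(u). Then the set ζ(q(U)) is within directed Hausdorff distance 2π/K of U in both directions: d_H(U, ζ(q(U))) ≤ 2π/K and d_H(ζ(q(U)), U) ≤ 2π/K. -/
open Real Set

/-- The angular distance between two angles. -/
noncomputable def angDist (u v : ℝ) : ℝ := min |u - v| (2 * π - |u - v|)

/-- Directed Hausdorff distance between two (nonempty) finite sets of angles: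
`dH S S' = max_{u' ∈ S'} min_{u ∈ S} angDist u u'` (junk value `0` if either set
is empty). -/
noncomputable def dirHaus (S S' : Finset ℝ) : ℝ :=
  if h : S.Nonempty ∧ S'.Nonempty then
    S'.sup' h.2 (fun u' => S.inf' h.1 (fun u => angDist u u'))
  else 0

/-- The `k`-th grid interval `I_k = [2π(k-1)/K, 2πk/K]`. -/
noncomputable def gridInterval (K k : ℕ) : Set ℝ :=
  Icc (2 * π * ((k : ℝ) - 1) / K) (2 * π * (k : ℝ) / K)

/-- Angular distance from an angle `u` to the interval `I_k`. -/
noncomputable def distToInterval (K k : ℕ) (u : ℝ) : ℝ :=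
  sInf (angDist u '' gridInterval K k)

/-- Soft indicator of the `k`-th grid interval. -/
noncomputable def softInd (K k : ℕ) (u : ℝ) : ℝ :=
  Real.exp (-(distToInterval K k u))

/-- The occupancy vector `q(U) ∈ ℝ^K` of a finite set of angles `U`; its
coordinate indexed by `j : Fin K` is `q_{j+1}(U) = max_{u ∈ U} h_{j+1}(u)`
(junk value `0` if `U` is empty). -/
noncomputable def occVec (K : ℕ) (U : Finset ℝ) : Fin K → ℝ :=
  fun j => if h : U.Nonempty then U.sup' h (softInd K (j.val + 1)) else 0

/-- `ζ` maps a vector `q ∈ ℝ^K` to the finite set of left endpoints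
`{2π(k-1)/K : 1 ≤ k ≤ K, q_k ≥ 1}`, where coordinate `j : Fin K` corresponds
to `k = j + 1`. -/
noncomputable def zeta (K : ℕ) (q : Fin K → ℝ) : Finset ℝ :=
  (Finset.univ.filter (fun j : Fin K => 1 ≤ q j)).image
    (fun j : Fin K => 2 * π * (j.val : ℝ) / K)

lemma grid_eq (K j : ℕ) : gridInterval K (j+1)
    = Icc (2*π*(j:ℝ)/K) (2*π*((j:ℝ)+1)/K) := by
  unfold gridInterval; push_cast; ring_nf

lemma angDist_tri (u v w : ℝ) : angDist u w ≤ angDist u v + |v - w| := by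
  unfold angDist
  rcases le_total |u - v| (2 * π - |u - v|) with h | h
  · rw [min_eq_left h]
    calc min |u - w| (2*π - |u-w|) ≤ |u - w| := min_le_left _ _
      _ ≤ |u - v| + |v - w| := abs_sub_le u v w
  · rw [min_eq_right h]
    have h2 : |u - v| ≤ |u - w| + |w - v| := abs_sub_le u w v
    rw [abs_sub_comm w v] at h2
    calc min |u - w| (2*π - |u-w|) ≤ 2*π - |u - w| := min_le_right _ _
      _ ≤ 2*π - |u - v| + |v - w| := by linarith

lemma mem_grid_bounds {K j : ℕ} (hj : j < K) {v : ℝ}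
    (hv : v ∈ gridInterval K (j+1)) : v ∈ Icc (0:ℝ) (2*π) := by
  rw [grid_eq] at hv
  obtain ⟨h1, h2⟩ := hv
  have hK0 : (0:ℝ) < K := by
    have : 0 < K := by omega
    exact_mod_cast this
  constructor
  · have : (0:ℝ) ≤ 2*π*(j:ℝ)/K := by positivity
    linarith
  · have hjK : ((j:ℝ)+1) ≤ K := by exact_mod_cast hj
    have : 2*π*((j:ℝ)+1)/K ≤ 2*π := by
      rw [div_le_iff₀ hK0]
      nlinarith [pi_pos]
    linarith

lemma mem_grid_close {K j : ℕ} (hK0 : (0:ℝ) < K) {v : ℝ}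
    (hv : v ∈ gridInterval K (j+1)) : |v - 2*π*(j:ℝ)/K| ≤ 2*π/K := by
  rw [grid_eq] at hv
  obtain ⟨h1, h2⟩ := hv
  rw [abs_le]
  have he : 2*π*((j:ℝ)+1)/K = 2*π*(j:ℝ)/K + 2*π/K := by ring
  have hp : (0:ℝ) ≤ 2*π/K := by positivity
  constructor <;> linarith

lemma grid_nonempty {K j : ℕ} (hK0 : (0:ℝ) < K) :
    (gridInterval K (j+1)).Nonempty := by
  rw [grid_eq]
  refine ⟨2*π*(j:ℝ)/K, le_refl _, ?_⟩
  have hp : (0:ℝ) ≤ 2*π/K := by positivity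
  have he : 2*π*((j:ℝ)+1)/K = 2*π*(j:ℝ)/K + 2*π/K := by ring
  linarith

lemma angDist_left_le {K j : ℕ} (hK0 : (0:ℝ) < K) (u : ℝ) :
    angDist u (2*π*(j:ℝ)/K) ≤ distToInterval K (j+1) u + 2*π/K := by
  have hne : (angDist u '' gridInterval K (j+1)).Nonempty :=
    (grid_nonempty hK0).image _
  have hlb : angDist u (2*π*(j:ℝ)/K) - 2*π/K
      ∈ lowerBounds (angDist u '' gridInterval K (j+1)) := by
    rintro x ⟨v, hv, rfl⟩
    have h1 := angDist_tri u v (2*π*(j:ℝ)/K)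
    have h2 := mem_grid_close hK0 hv
    linarith
  have := le_csInf hne hlb
  unfold distToInterval
  linarith

lemma dist_nonpos {K j : ℕ} (hj : j < K) {u : ℝ}
    (hu : u ∈ gridInterval K (j+1)) : distToInterval K (j+1) u ≤ 0 := by
  have hbdd : BddBelow (angDist u '' gridInterval K (j+1)) := by
    refine ⟨0, ?_⟩
    rintro x ⟨v, hv, rfl⟩
    have hub := mem_grid_bounds hj hu
    have hvb := mem_grid_bounds hj hv
    have habs : |u - v| ≤ 2*π := by
      rw [abs_le]
      constructor
      · linarith [hub.1, hvb.2]
      · linarith [hub.2, hvb.1]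
    exact le_min (abs_nonneg _) (by linarith)
  have h0 : angDist u u = 0 := by
    unfold angDist
    simp only [sub_self, abs_zero, sub_zero]
    rw [min_eq_left (by positivity)]
  have := csInf_le hbdd ⟨u, hu, h0⟩
  unfold distToInterval
  linarith

lemma cover {K : ℕ} (hK : 1 ≤ K) {u : ℝ} (hu : u ∈ Icc (0:ℝ) (2*π)) :
    ∃ j : Fin K, u ∈ gridInterval K (j.val + 1) := by
  have hK0 : (0:ℝ) < K := by exact_mod_cast hK
  have hπ : (0:ℝ) < 2*π := by positivity
  set m : ℕ := ⌊u * K / (2*π)⌋₊ with hm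
  have hfl : (m:ℝ) * (2*π) ≤ u * K := by
    have := Nat.floor_le (div_nonneg (mul_nonneg hu.1 hK0.le) hπ.le) (R := ℝ)
      (a := u * K / (2*π))
    rw [le_div_iff₀ hπ] at this
    exact this
  have hfl' : u * K < ((m:ℝ) + 1) * (2*π) := by
    have := Nat.lt_floor_add_one (u * K / (2*π))
    rw [div_lt_iff₀ hπ] at this
    exact this
  refine ⟨⟨min m (K-1), lt_of_le_of_lt (min_le_right _ _) (Nat.sub_lt hK one_pos)⟩, ?_⟩
  rw [grid_eq]
  simp only [Fin.val_mk]
  constructor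
  · rw [div_le_iff₀ hK0]
    have h1 : ((min m (K-1) : ℕ):ℝ) ≤ (m:ℝ) := by exact_mod_cast min_le_left m (K-1)
    nlinarith
  · rw [le_div_iff₀ hK0]
    rcases le_or_gt m (K-1) with h | h
    · have hjm : min m (K-1) = m := min_eq_left h
      rw [hjm]
      nlinarith
    · have hjm : min m (K-1) = K - 1 := min_eq_right h.le
      have hc : ((min m (K-1) : ℕ):ℝ) + 1 = (K:ℝ) := by
        rw [hjm]
        have : (K - 1 : ℕ) + 1 = K := Nat.succ_pred_eq_of_pos hK
        exact_mod_cast congrArg (Nat.cast (R := ℝ)) this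
      rw [hc]
      nlinarith [hu.2]

lemma occ_ge_one {K : ℕ} (hK : 1 ≤ K) {U : Finset ℝ} (hne : U.Nonempty)
    {u : ℝ} (hu : u ∈ U) {j : Fin K} (hg : u ∈ gridInterval K (j.val + 1)) :
    1 ≤ occVec K U j := by
  have hd : distToInterval K (j.val + 1) u ≤ 0 := dist_nonpos j.isLt hg
  have hs : 1 ≤ softInd K (j.val + 1) u := by
    unfold softInd
    calc (1:ℝ) = Real.exp 0 := Real.exp_zero.symm
      _ ≤ _ := Real.exp_le_exp.mpr (by linarith)
  calc (1:ℝ) ≤ softInd K (j.val + 1) u := hs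
    _ ≤ U.sup' hne (softInd K (j.val + 1)) := Finset.le_sup' _ hu
    _ = occVec K U j := by unfold occVec; rw [dif_pos hne]

theorem dirHaus_zeta_occVec_le (K : ℕ) (hK : 1 ≤ K) (U : Finset ℝ)
    (hne : U.Nonempty) (hU : ↑U ⊆ Icc (0 : ℝ) (2 * π)) :
    dirHaus U (zeta K (occVec K U)) ≤ 2 * π / K ∧
      dirHaus (zeta K (occVec K U)) U ≤ 2 * π / K := by
  have hK0 : (0:ℝ) < K := by exact_mod_cast hK
  -- membership criterion for zeta
  have hmemZ : ∀ j : Fin K, 1 ≤ occVec K U j →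
      2 * π * (j.val : ℝ) / K ∈ zeta K (occVec K U) := by
    intro j hj
    unfold zeta
    exact Finset.mem_image.mpr ⟨j, Finset.mem_filter.mpr ⟨Finset.mem_univ _, hj⟩, rfl⟩
  -- zeta nonempty
  obtain ⟨u₀, hu₀⟩ := id hne
  obtain ⟨j₀, hj₀⟩ := cover hK (hU hu₀)
  have hZne : (zeta K (occVec K U)).Nonempty :=
    ⟨_, hmemZ j₀ (occ_ge_one hK ⟨u₀, hu₀⟩ hu₀ hj₀)⟩
  constructor
  · -- every point of zeta is close to U
    unfold dirHaus
    rw [dif_pos ⟨hne, hZne⟩]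
    apply Finset.sup'_le
    intro x hx
    unfold zeta at hx
    obtain ⟨j, hjmem, rfl⟩ := Finset.mem_image.mp hx
    have hj1 : 1 ≤ occVec K U j := (Finset.mem_filter.mp hjmem).2
    -- there is a witness u in U achieving the sup
    have hq : occVec K U j = U.sup' hne (softInd K (j.val + 1)) := by
      unfold occVec; rw [dif_pos hne]
    obtain ⟨u, hu, heq⟩ := Finset.exists_mem_eq_sup' hne (softInd K (j.val + 1))
    have hs : 1 ≤ softInd K (j.val + 1) u := by rw [← heq, ← hq]; exact hj1
    have hd : distToInterval K (j.val + 1) u ≤ 0 := by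
      unfold softInd at hs
      have h0 : Real.exp 0 ≤ Real.exp (-distToInterval K (j.val + 1) u) := by
        rwa [Real.exp_zero]
      have := Real.exp_le_exp.mp h0
      linarith
    have hclose : angDist u (2 * π * (j.val : ℝ) / K) ≤ 2 * π / K := by
      have := angDist_left_le (j := j.val) hK0 u
      linarith
    exact le_trans (Finset.inf'_le _ hu) hclose
  · -- every point of U is close to zeta
    unfold dirHaus
    rw [dif_pos ⟨hZne, hne⟩]
    apply Finset.sup'_le
    intro u hu
    obtain ⟨j, hj⟩ := cover hK (hU hu)
    have hmem := hmemZ j (occ_ge_one hK hne hu hj)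
    have hclose : angDist (2 * π * (j.val : ℝ) / K) u ≤ 2 * π / K := by
      unfold angDist
      have h2 := mem_grid_close (j := j.val) hK0 hj
      rw [abs_sub_comm] at h2
      exact le_trans (min_le_left _ _) h2
    exact le_trans (Finset.inf'_le _ hmem) hclose
end

section
/- Theorem 1 (universal approximation of continuous set functions on angles by max pooling). Fix an integer M ≥ 1 and let f be a continuous set function on nonempty finite subsets of [0, 2π]. Then for every ε > 0 there exist an integer K ≥ 1, a continuous function h : [0, 2π] → ℝ^K, and a continuous function γ : ℝ^K → ℝ such that for all u_1, …, u_M ∈ [0, 2π], |f({u_1, …, u_M}) − γ(MAX(h(u_1), …, h(u_M)))| < ε, where MAX denotes the elementwise vector maximum; in particular, since γ ∘ MAX is a symmetric function of its arguments, f is approximated to within ε by a symmetric function of the form γ ∘ MAX ∘ h. -/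
open Real Set

/-- Elementwise vector maximum of `M` vectors in `ℝ^K`
(junk value `0` in each coordinate if `M = 0`). -/
noncomputable def vecMax {K M : ℕ} (v : Fin M → Fin K → ℝ) : Fin K → ℝ :=
  fun k =>
    if h : (Finset.univ : Finset (Fin M)).Nonempty then
      Finset.univ.sup' h (fun i => v i k)
    else 0

lemma angDist_le_abs (u v : ℝ) : angDist u v ≤ |u - v| := min_le_left _ _

lemma dirHaus_le_of {S S' : Finset ℝ} (hS : S.Nonempty) (hS' : S'.Nonempty) {c : ℝ}
    (h : ∀ y ∈ S', ∃ x ∈ S, angDist x y ≤ c) : dirHaus S S' ≤ c := by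
  rw [dirHaus, dif_pos ⟨hS, hS'⟩]
  apply Finset.sup'_le
  intro y hy
  obtain ⟨x, hx, hxy⟩ := h y hy
  exact le_trans (Finset.inf'_le _ hx) hxy

section aux

variable {M : ℕ} [Nonempty (Fin M)]

/-- distance from a point to the finite set of values of `u`. -/
noncomputable def Dfun (u : Fin M → ℝ) (s : ℝ) : ℝ :=
  Finset.univ.inf' Finset.univ_nonempty (fun i => |u i - s|)

lemma Dfun_le (u : Fin M → ℝ) (s : ℝ) (j : Fin M) : Dfun u s ≤ |u j - s| :=
  Finset.inf'_le _ (Finset.mem_univ j)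

lemma exists_Dfun (u : Fin M → ℝ) (s : ℝ) : ∃ j, Dfun u s = |u j - s| := by
  obtain ⟨j, _, hj⟩ := Finset.exists_mem_eq_inf' (Finset.univ_nonempty) (fun i => |u i - s|)
  exact ⟨j, hj⟩

lemma image_nonempty (u : Fin M → ℝ) : (Finset.image u Finset.univ).Nonempty :=
  Finset.image_nonempty.mpr Finset.univ_nonempty

lemma vecMax_eq {K : ℕ} (t : Fin K → ℝ) (u : Fin M → ℝ) :
    vecMax (fun i k => -|u i - t k|) = fun k => -(Dfun u (t k)) := by
  funext k
  rw [vecMax, dif_pos Finset.univ_nonempty]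
  apply le_antisymm
  · apply Finset.sup'_le
    intro i _
    simp only [neg_le_neg_iff]
    exact Dfun_le u (t k) i
  · obtain ⟨j, hj⟩ := exists_Dfun u (t k)
    rw [hj]
    exact Finset.le_sup' (fun i => -|u i - t k|) (Finset.mem_univ j)

/-- Lemma A: pointwise close tuples have close image sets. -/
lemma dirHaus_image_le (u p : Fin M → ℝ) {c : ℝ} (h : ∀ i, |u i - p i| ≤ c) :
    dirHaus (Finset.image u Finset.univ) (Finset.image p Finset.univ) ≤ c := by
  apply dirHaus_le_of (image_nonempty u) (image_nonempty p)
  intro y hy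
  rw [Finset.mem_image] at hy
  obtain ⟨j, _, rfl⟩ := hy
  exact ⟨u j, Finset.mem_image_of_mem u (Finset.mem_univ j),
    le_trans (angDist_le_abs _ _) (h j)⟩

/-- Lemma B: if the distance functions to a `ρ`-dense grid agree up to `η`,
then the directed Hausdorff distance is at most `ρ + η + ρ`. -/
lemma dirHaus_image_le_of_D {K : ℕ} (t : Fin K → ℝ) {ρ η : ℝ}
    (u p : Fin M → ℝ) (hp : ∀ i, p i ∈ Icc (0:ℝ) (2 * π))
    (hgrid : ∀ y ∈ Icc (0:ℝ) (2 * π), ∃ k, |y - t k| ≤ ρ)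
    (hD : ∀ k, |Dfun u (t k) - Dfun p (t k)| ≤ η) :
    dirHaus (Finset.image u Finset.univ) (Finset.image p Finset.univ) ≤ ρ + η + ρ := by
  apply dirHaus_le_of (image_nonempty u) (image_nonempty p)
  intro y hy
  rw [Finset.mem_image] at hy
  obtain ⟨j, _, rfl⟩ := hy
  obtain ⟨k, hk⟩ := hgrid (p j) (hp j)
  have h1 : Dfun p (t k) ≤ ρ := le_trans (Dfun_le p (t k) j) hk
  have h2 : Dfun u (t k) ≤ ρ + η := by
    have := abs_le.mp (hD k)
    linarith [this.2]
  obtain ⟨i, hi⟩ := exists_Dfun u (t k)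
  refine ⟨u i, Finset.mem_image_of_mem u (Finset.mem_univ i), ?_⟩
  calc angDist (u i) (p j) ≤ |u i - p j| := angDist_le_abs _ _
    _ ≤ |u i - t k| + |t k - p j| := abs_sub_le _ _ _
    _ ≤ (ρ + η) + ρ := by
        rw [abs_sub_comm (t k)]
        exact add_le_add (hi ▸ h2) hk

end aux

/-- Grid covering lemma. -/
lemma grid_cover (K : ℕ) (hK : 1 ≤ K) (y : ℝ) (hy : y ∈ Icc (0:ℝ) (2 * π)) :
    ∃ k : Fin K, |y - 2 * π * k / K| ≤ 2 * π / K := by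
  have hπ : (0:ℝ) < 2 * π := by positivity
  have hK0 : (0:ℝ) < K := by exact_mod_cast hK
  set r := y * K / (2 * π) with hr
  have hr0 : 0 ≤ r := by
    apply div_nonneg _ (le_of_lt hπ)
    exact mul_nonneg hy.1 (le_of_lt hK0)
  have hrK : r ≤ K := by
    rw [hr, div_le_iff₀ hπ]
    calc y * K ≤ (2 * π) * K := by nlinarith [hy.2]
      _ = K * (2 * π) := by ring
  have hm : min ⌊r⌋₊ (K - 1) < K := lt_of_le_of_lt (min_le_right _ _) (Nat.sub_lt hK one_pos)
  refine ⟨⟨min ⌊r⌋₊ (K - 1), hm⟩, ?_⟩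
  set m := min ⌊r⌋₊ (K - 1) with hmdef
  have key : |r - (m:ℝ)| ≤ 1 := by
    rcases le_or_gt ⌊r⌋₊ (K - 1) with hc | hc
    · have hmm : m = ⌊r⌋₊ := min_eq_left hc
      rw [hmm]
      have h1 : (⌊r⌋₊ : ℝ) ≤ r := Nat.floor_le hr0
      have h2 : r < ⌊r⌋₊ + 1 := Nat.lt_floor_add_one r
      rw [abs_le]; constructor <;> linarith
    · have hmm : m = K - 1 := min_eq_right (le_of_lt hc)
      have hfl : (K:ℝ) ≤ ⌊r⌋₊ := by
        have : K ≤ ⌊r⌋₊ := by omega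
        exact_mod_cast this
      have h1 : (⌊r⌋₊ : ℝ) ≤ r := Nat.floor_le hr0
      have hrk : r = K := le_antisymm hrK (le_trans hfl h1)
      have hcast : ((K - 1 : ℕ) : ℝ) = (K:ℝ) - 1 := by
        rw [Nat.cast_sub hK]; norm_num
      rw [hmm, hcast, hrk]
      norm_num
  have hrep : y - 2 * π * (⟨m, hm⟩ : Fin K) / K = (2 * π / K) * (r - m) := by
    have hKne : (K:ℝ) ≠ 0 := ne_of_gt hK0
    have hπne : (2 * π : ℝ) ≠ 0 := ne_of_gt hπ
    simp only [Fin.val_mk]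
    field_simp [hr]
    have hr2 : π * r * 2 = y * K := by rw [hr]; field_simp
    linarith
  rw [hrep, abs_mul, abs_of_pos (by positivity : (0:ℝ) < 2 * π / K)]
  calc 2 * π / K * |r - m| ≤ 2 * π / K * 1 :=
        mul_le_mul_of_nonneg_left key (by positivity)
    _ = 2 * π / K := mul_one _

/-- **Theorem 1** (universal approximation of continuous set functions on angles
by max pooling). -/
theorem universal_approx_max_pooling (M : ℕ) (hM : 1 ≤ M) (f : Finset ℝ → ℝ)
    (hf : ∀ ε > (0 : ℝ), ∃ δ > (0 : ℝ), ∀ S S' : Finset ℝ,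
      S.Nonempty → S'.Nonempty →
      ↑S ⊆ Icc (0 : ℝ) (2 * π) → ↑S' ⊆ Icc (0 : ℝ) (2 * π) →
      dirHaus S S' < δ → dirHaus S' S < δ → |f S - f S'| < ε) :
    ∀ ε > (0 : ℝ), ∃ K : ℕ, 1 ≤ K ∧
      ∃ h : ℝ → Fin K → ℝ, ∃ γ : (Fin K → ℝ) → ℝ,
        ContinuousOn h (Icc (0 : ℝ) (2 * π)) ∧ Continuous γ ∧
        ∀ u : Fin M → ℝ, (∀ i, u i ∈ Icc (0 : ℝ) (2 * π)) →
          |f (Finset.image u Finset.univ) - γ (vecMax (fun i => h (u i)))| < ε := by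
  haveI : Nonempty (Fin M) := ⟨⟨0, hM⟩⟩
  intro ε hε
  obtain ⟨δ, hδ, hfδ⟩ := hf (ε / 2) (by positivity)
  have hπ : (0:ℝ) < 2 * π := by positivity
  -- choose K
  set K : ℕ := max ⌈16 * π / δ⌉₊ 1 with hKdef
  have hK1 : 1 ≤ K := le_max_right _ _
  have hK0 : (0:ℝ) < K := by exact_mod_cast hK1
  have hρ : 2 * π / K ≤ δ / 8 := by
    have h1 : (16 * π / δ : ℝ) ≤ K := le_trans (Nat.le_ceil _)
      (by exact_mod_cast Nat.cast_le.mpr (le_max_left ⌈16 * π / δ⌉₊ 1))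
    rw [div_le_div_iff₀ hK0 (by norm_num : (0:ℝ) < 8)]
    rw [div_le_iff₀ hδ] at h1
    nlinarith
  set ρ : ℝ := 2 * π / K with hρdef
  set η : ℝ := δ / 2 with hηdef
  have hη0 : 0 < η := by positivity
  have hsum : ρ + η + ρ < δ := by
    have : ρ ≤ δ / 8 := hρ
    rw [hηdef]; linarith
  -- grid and features
  set t : Fin K → ℝ := fun k => 2 * π * k / K with htdef
  have hgrid : ∀ y ∈ Icc (0:ℝ) (2 * π), ∃ k : Fin K, |y - t k| ≤ ρ :=
    fun y hy => grid_cover K hK1 y hy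
  set h : ℝ → Fin K → ℝ := fun u k => -|u - t k| with hhdef
  set Φ : (Fin M → ℝ) → Fin K → ℝ := fun u k => -(Dfun u (t k)) with hΦdef
  set g : (Fin M → ℝ) → ℝ := fun u => f (Finset.image u Finset.univ) with hgdef
  set cube : Set (Fin M → ℝ) := Icc 0 (fun _ => 2 * π) with hcubedef
  have hcube_mem : ∀ u : Fin M → ℝ, u ∈ cube ↔ ∀ i, u i ∈ Icc (0:ℝ) (2 * π) := by
    intro u
    simp only [hcubedef, Set.mem_Icc, Pi.le_def, Set.mem_Icc]
    constructor
    · rintro ⟨h1, h2⟩ i; exact ⟨h1 i, h2 i⟩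
    · intro hi; exact ⟨fun i => (hi i).1, fun i => (hi i).2⟩
  have hsubset : ∀ u : Fin M → ℝ, (∀ i, u i ∈ Icc (0:ℝ) (2 * π)) →
      ↑(Finset.image u Finset.univ) ⊆ Icc (0:ℝ) (2 * π) := by
    intro u hu x hx
    simp only [Finset.coe_image, Set.mem_image] at hx
    obtain ⟨i, _, rfl⟩ := hx
    exact hu i
  -- continuity of g on the cube
  have hgc : ContinuousOn g cube := by
    rw [Metric.continuousOn_iff]
    intro b hb ε' hε'
    obtain ⟨δ', hδ', hfδ'⟩ := hf ε' hε'
    refine ⟨δ', hδ', fun a ha hab => ?_⟩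
    have ha' := (hcube_mem a).mp ha
    have hb' := (hcube_mem b).mp hb
    have h1 : ∀ i, |a i - b i| ≤ dist a b := by
      intro i
      rw [← Real.dist_eq]
      exact dist_le_pi_dist a b i
    have h2 : ∀ i, |b i - a i| ≤ dist a b := by
      intro i
      rw [abs_sub_comm]; exact h1 i
    have hd1 : dirHaus (Finset.image a Finset.univ) (Finset.image b Finset.univ) < δ' :=
      lt_of_le_of_lt (dirHaus_image_le a b h1) hab
    have hd2 : dirHaus (Finset.image b Finset.univ) (Finset.image a Finset.univ) < δ' := by
      refine lt_of_le_of_lt (dirHaus_image_le b a h2) hab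
    have := hfδ' (Finset.image a Finset.univ) (Finset.image b Finset.univ)
      (image_nonempty a) (image_nonempty b) (hsubset a ha') (hsubset b hb') hd1 hd2
    rwa [Real.dist_eq]
  -- bound on g
  obtain ⟨C, hC⟩ := (isCompact_Icc.exists_bound_of_continuousOn hgc)
  set B : ℝ := max C 0 with hBdef
  have hB : ∀ u ∈ cube, |g u| ≤ B := by
    intro u hu
    exact le_trans (hC u hu) (le_max_left _ _)
  have hB0 : 0 ≤ B := le_max_right _ _
  set L : ℝ := (2 * B + 2) / η with hLdef
  have hL0 : 0 ≤ L := by positivity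
  -- the index type
  haveI : Nonempty ↥cube := ⟨⟨0, by
    rw [hcube_mem]
    intro i
    simp only [Pi.zero_apply, Set.mem_Icc]
    exact ⟨le_refl _, by linarith⟩⟩⟩
  set γ : (Fin K → ℝ) → ℝ :=
    fun y => ⨅ p : ↥cube, (g p.1 + L * dist y (Φ p.1)) with hγdef
  have hbdd : ∀ y : Fin K → ℝ,
      BddBelow (Set.range fun p : ↥cube => g p.1 + L * dist y (Φ p.1)) := by
    intro y
    refine ⟨-B, ?_⟩
    rintro _ ⟨p, rfl⟩
    show -B ≤ g p.1 + L * dist y (Φ p.1)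
    have h1 : |g p.1| ≤ B := hB p.1 p.2
    have h2 : 0 ≤ L * dist y (Φ p.1) := mul_nonneg hL0 dist_nonneg
    have := (abs_le.mp h1).1
    linarith
  -- Lipschitz estimate for γ
  have hlip : ∀ y y' : Fin K → ℝ, γ y ≤ γ y' + L * dist y y' := by
    intro y y'
    rw [hγdef, ← sub_le_iff_le_add]
    apply le_ciInf
    intro p
    have h1 : γ y ≤ g p.1 + L * dist y (Φ p.1) := ciInf_le (hbdd y) p
    have h2 : dist y (Φ p.1) ≤ dist y y' + dist y' (Φ p.1) := dist_triangle _ _ _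
    have h3 : L * dist y (Φ p.1) ≤ L * (dist y y' + dist y' (Φ p.1)) :=
      mul_le_mul_of_nonneg_left h2 hL0
    have : γ y ≤ g p.1 + L * dist y y' + L * dist y' (Φ p.1) := by nlinarith
    linarith
  have hγc : Continuous γ := by
    apply LipschitzWith.continuous (K := L.toNNReal)
    apply LipschitzWith.of_dist_le_mul
    intro y y'
    rw [Real.coe_toNNReal L hL0, Real.dist_eq, abs_le]
    have h1 := hlip y y'
    have h2 := hlip y' y
    rw [dist_comm y' y] at h2
    constructor <;> linarith
  -- key estimates
  have hDdist : ∀ (a b : Fin M → ℝ) (k : Fin K),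
      |Dfun a (t k) - Dfun b (t k)| ≤ dist (Φ a) (Φ b) := by
    intro a b k
    have := dist_le_pi_dist (Φ a) (Φ b) k
    rw [Real.dist_eq] at this
    simp only [hΦdef] at this
    rwa [neg_sub_neg, abs_sub_comm] at this
  have hupper : ∀ u ∈ cube, γ (Φ u) ≤ g u := by
    intro u hu
    have := ciInf_le (hbdd (Φ u)) (⟨u, hu⟩ : ↥cube)
    simpa using this
  have hlower : ∀ u ∈ cube, g u - ε / 2 ≤ γ (Φ u) := by
    intro u hu
    apply le_ciInf
    intro p
    rcases le_or_gt (dist (Φ u) (Φ p.1)) η with hcase | hcase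
    · -- close in feature space: sets are Hausdorff-close
      have hu' := (hcube_mem u).mp hu
      have hp' := (hcube_mem p.1).mp p.2
      have hD1 : ∀ k, |Dfun u (t k) - Dfun p.1 (t k)| ≤ η :=
        fun k => le_trans (hDdist u p.1 k) hcase
      have hD2 : ∀ k, |Dfun p.1 (t k) - Dfun u (t k)| ≤ η := by
        intro k; rw [abs_sub_comm]; exact hD1 k
      have hd1 : dirHaus (Finset.image u Finset.univ) (Finset.image p.1 Finset.univ) < δ :=
        lt_of_le_of_lt (dirHaus_image_le_of_D t u p.1 hp' hgrid hD1) hsum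
      have hd2 : dirHaus (Finset.image p.1 Finset.univ) (Finset.image u Finset.univ) < δ :=
        lt_of_le_of_lt (dirHaus_image_le_of_D t p.1 u hu' hgrid hD2) hsum
      have hff := hfδ (Finset.image u Finset.univ) (Finset.image p.1 Finset.univ)
        (image_nonempty u) (image_nonempty p.1) (hsubset u hu') (hsubset p.1 hp') hd1 hd2
      have h2 : 0 ≤ L * dist (Φ u) (Φ p.1) := mul_nonneg hL0 dist_nonneg
      have := (abs_lt.mp hff).2
      simp only [hgdef] at *
      linarith
    · -- far in feature space: penalty term dominates
      have h1 : L * η ≤ L * dist (Φ u) (Φ p.1) :=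
        mul_le_mul_of_nonneg_left (le_of_lt hcase) hL0
      have h2 : L * η = 2 * B + 2 := by
        rw [hLdef]; field_simp
      have h3 : -B ≤ g p.1 := by
        have := (abs_le.mp (hB p.1 p.2)).1; linarith
      have h4 : g u ≤ B := (abs_le.mp (hB u hu)).2
      linarith
  -- assemble
  refine ⟨K, hK1, h, γ, ?_, hγc, ?_⟩
  · apply Continuous.continuousOn
    apply continuous_pi
    intro k
    exact ((continuous_id.sub continuous_const).abs).neg
  · intro u hu
    have hucube : u ∈ cube := (hcube_mem u).mpr hu
    have hvm : vecMax (fun i => h (u i)) = Φ u := by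
      rw [hhdef]
      exact vecMax_eq t u
    rw [hvm]
    have h1 := hupper u hucube
    have h2 := hlower u hucube
    rw [abs_lt]
    constructor <;> simp only [hgdef] at h1 h2 <;> linarith
end
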